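/- Let L be the free Lie algebra over ℚ on two generators x₀, x₁, and for f ∈ L let d_f be the unique derivation of L with d_f(x₀) = 0 and d_f(x₁) = [x₁, f]. Then the Ihara bracket {f,g} := d_f(g) − d_g(f) + [f,g] is ℚ-bilinear, antisymmetric, and satisfies the Jacobi identity; hence (L, {−,−}) is a Lie algebra over ℚ. -/
import Mathlib

open FreeLieAlgebra

private lemma lieSpan_range_of_top :
    LieSubalgebra.lieSpan ℚ (FreeLieAlgebra ℚ (Fin 2)) (Set.range (of ℚ)) = ⊤ := by
  rw [eq_top_iff]
  set S := LieSubalgebra.lieSpan ℚ (FreeLieAlgebra ℚ (Fin 2)) (Set.range (of ℚ)) with hS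
  rintro a -
  let F : FreeLieAlgebra ℚ (Fin 2) →ₗ⁅ℚ⁆ S :=
    lift ℚ (fun i => ⟨of ℚ i, LieSubalgebra.subset_lieSpan ⟨i, rfl⟩⟩)
  have key : S.incl.comp F = LieHom.id := by
    apply hom_ext
    intro i
    simp only [LieHom.coe_comp, Function.comp_apply, F, lift_of_apply, LieHom.id_apply]
    rfl
  have : S.incl (F a) = a := by
    have := LieHom.congr_fun key a
    simpa using this
  rw [← this]
  exact (F a).2

private lemma dext {D1 D2 : LieDerivation ℚ (FreeLieAlgebra ℚ (Fin 2)) (FreeLieAlgebra ℚ (Fin 2))}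
    (h0 : D1 (of ℚ (0 : Fin 2)) = D2 (of ℚ (0 : Fin 2)))
    (h1 : D1 (of ℚ (1 : Fin 2)) = D2 (of ℚ (1 : Fin 2))) : D1 = D2 := by
  apply LieDerivation.ext_of_lieSpan_eq_top _ lieSpan_range_of_top
  rintro x ⟨i, rfl⟩
  fin_cases i
  · exact h0
  · exact h1

/-- Let `L` be the free Lie algebra over `ℚ` on `x₀, x₁` and for `f ∈ L` let
`d f` be the (unique) derivation of `L` with `d_f(x₀) = 0`, `d_f(x₁) = [x₁, f]`. Then the
Ihara bracket `{f,g} = d_f(g) − d_g(f) + [f,g]` is `ℚ`-bilinear, antisymmetric and satisfies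
the Jacobi identity, so `(L, {−,−})` is a Lie algebra over `ℚ`. -/
theorem ihara_bracket_lieAlgebra
    (d : FreeLieAlgebra ℚ (Fin 2) →
      LieDerivation ℚ (FreeLieAlgebra ℚ (Fin 2)) (FreeLieAlgebra ℚ (Fin 2)))
    (hd : ∀ f : FreeLieAlgebra ℚ (Fin 2),
      (d f) (of ℚ (0 : Fin 2)) = 0 ∧ (d f) (of ℚ (1 : Fin 2)) = ⁅of ℚ (1 : Fin 2), f⁆) :
    (∀ (r : ℚ) (f f' g : FreeLieAlgebra ℚ (Fin 2)),
        (d (r • f + f')) g - (d g) (r • f + f') + ⁅r • f + f', g⁆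
          = r • ((d f) g - (d g) f + ⁅f, g⁆) + ((d f') g - (d g) f' + ⁅f', g⁆)) ∧
    (∀ (r : ℚ) (f g g' : FreeLieAlgebra ℚ (Fin 2)),
        (d f) (r • g + g') - (d (r • g + g')) f + ⁅f, r • g + g'⁆
          = r • ((d f) g - (d g) f + ⁅f, g⁆) + ((d f) g' - (d g') f + ⁅f, g'⁆)) ∧
    (∀ f g : FreeLieAlgebra ℚ (Fin 2),
        (d f) g - (d g) f + ⁅f, g⁆ = -((d g) f - (d f) g + ⁅g, f⁆)) ∧
    (∀ f g h : FreeLieAlgebra ℚ (Fin 2),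
        ((d f) ((d g) h - (d h) g + ⁅g, h⁆)
            - (d ((d g) h - (d h) g + ⁅g, h⁆)) f + ⁅f, (d g) h - (d h) g + ⁅g, h⁆⁆)
          + ((d g) ((d h) f - (d f) h + ⁅h, f⁆)
            - (d ((d h) f - (d f) h + ⁅h, f⁆)) g + ⁅g, (d h) f - (d f) h + ⁅h, f⁆⁆)
          + ((d h) ((d f) g - (d g) f + ⁅f, g⁆)
            - (d ((d f) g - (d g) f + ⁅f, g⁆)) h + ⁅h, (d f) g - (d g) f + ⁅f, g⁆⁆) = 0) := by
  have hlin : ∀ (r : ℚ) (f f' : FreeLieAlgebra ℚ (Fin 2)),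
      d (r • f + f') = r • d f + d f' := by
    intro r f f'
    apply dext
    · simp [(hd _).1, LieDerivation.add_apply, LieDerivation.smul_apply]
    · simp [(hd _).2, LieDerivation.add_apply, LieDerivation.smul_apply, lie_add, lie_smul]
  have hB : ∀ f g : FreeLieAlgebra ℚ (Fin 2),
      d ((d f) g - (d g) f + ⁅f, g⁆) = ⁅d f, d g⁆ := by
    intro f g
    apply dext
    · simp [(hd _).1, LieDerivation.commutator_apply]
    · simp only [(hd _).2, LieDerivation.commutator_apply, LieDerivation.apply_lie_eq_add,
        lie_add, lie_sub]
      rw [← lie_skew ⁅of ℚ 1, g⁆ f, lie_lie]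
      abel
  refine ⟨?_, ?_, ?_, ?_⟩
  · intro r f f' g
    rw [hlin, LieDerivation.add_apply, LieDerivation.smul_apply, map_add, map_smul]
    simp only [add_lie, smul_lie, smul_sub, smul_add]
    abel
  · intro r f g g'
    rw [hlin, LieDerivation.add_apply, LieDerivation.smul_apply, map_add, map_smul]
    simp only [lie_add, lie_smul, smul_sub, smul_add]
    abel
  · intro f g
    rw [← lie_skew f g]
    abel
  · intro f g h
    rw [hB g h, hB h f, hB f g]
    simp only [LieDerivation.commutator_apply, map_sub, map_add,
      LieDerivation.apply_lie_eq_add, lie_add, lie_sub]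
    rw [← lie_skew ((d f) g) h, ← lie_skew ((d g) h) f, ← lie_skew ((d h) f) g,
      ← lie_skew h f]
    simp only [lie_neg]
    rw [← lie_skew h ⁅f, g⁆, lie_lie]
    abel
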